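/- Let 1 < p < ∞ and 1/p + 1/q = 1. For z ∈ 𝔻 let b_z(w) = (w − z)/(1 − conj(z)w) be the Blaschke factor and k_z(w) = (1 − |z|²)^{1/q}/(1 − conj(z)w). Then P_-(conj(b_z) k_z)(e^{iθ}) = (1 − |z|²)^{1/q} · e^{-iθ}/(1 − z e^{-iθ}), and there is a constant c > 0 such that ‖P_-(conj(b_z) k_z)‖_{L^p(𝕋)} ≥ c for all z with |z| sufficiently close to 1. -/

import Mathlib

open MeasureTheory Complex Filter Topology Metric Set AddCircle
open scoped ENNReal NNReal ComplexConjugate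

attribute [local instance] Classical.propDecidable

noncomputable section

instance : Fact (0 < 2 * Real.pi) := ⟨by positivity⟩

/-- The unit circle, parametrized as ℝ/2πℤ. -/
abbrev Tc := AddCircle (2 * Real.pi)

/-- Normalized Haar measure (dθ/2π) on the circle. -/
abbrev mTc : Measure Tc := AddCircle.haarAddCircle

/-- The boundary coordinate `e^{iθ}`. -/
def bc (x : Tc) : ℂ := fourier 1 x

/-- The Hardy space `H^p ⊆ L^p`: elements with vanishing negative Fourier coefficients. -/
def Hp (p : ℝ≥0∞) : Set (Lp ℂ p mTc) :=
  {f | ∀ n : ℤ, n < 0 → fourierCoeff (⇑f) n = 0}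

/-- `conj(H_0^p)`: elements with vanishing Fourier coefficients of index `≥ 0`. -/
def conjH0p (p : ℝ≥0∞) : Set (Lp ℂ p mTc) :=
  {f | ∀ n : ℤ, 0 ≤ n → fourierCoeff (⇑f) n = 0}

/-- Multiplication of an `L^p` element by a function (junk value `0` if the product
is not in `L^p`). -/
def mulLp {p : ℝ≥0∞} (ψ : Tc → ℂ) (f : Lp ℂ p mTc) : Lp ℂ p mTc :=
  if h : MemLp (fun x => ψ x * f x) p mTc then h.toLp _ else 0

/-- The element of `L^p` given by a function (junk value `0` if not in `L^p`). -/
def toLp' (p : ℝ≥0∞) (f : Tc → ℂ) : Lp ℂ p mTc :=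
  if h : MemLp f p mTc then h.toLp f else 0

/-- A function of the Hardy class `H^∞`: a bounded holomorphic function on the unit disc
together with its boundary values on the circle. -/
structure Hinf where
  toFun : ℂ → ℂ
  bdry : Tc → ℂ
  bound : ℝ
  analytic : DifferentiableOn ℂ toFun (ball (0 : ℂ) 1)
  le_bound : ∀ z ∈ ball (0 : ℂ) 1, ‖toFun z‖ ≤ bound
  bdry_meas : Measurable bdry
  bdry_le_bound : ∀ᵐ x ∂mTc, ‖bdry x‖ ≤ bound
  coeff_neg : ∀ n : ℤ, n < 0 → fourierCoeff bdry n = 0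
  taylor : ∀ z ∈ ball (0 : ℂ) 1,
    HasSum (fun n : ℕ => fourierCoeff bdry (n : ℤ) * z ^ n) (toFun z)

/-- Inner function: boundary values of modulus `1` a.e. -/
def Hinf.Inner (I : Hinf) : Prop := ∀ᵐ x ∂mTc, ‖I.bdry x‖ = 1

/-- Outer function: `log|φ(0)| = (1/2π) ∫ log|φ(e^{iθ})| dθ`. -/
def Hinf.Outer (φ : Hinf) : Prop :=
  φ.toFun 0 ≠ 0 ∧ Integrable (fun x => Real.log ‖φ.bdry x‖) mTc ∧
    Real.log ‖φ.toFun 0‖ = ∫ x, Real.log ‖φ.bdry x‖ ∂mTc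

/-- `K_I^p = H^p ∩ conj(I)·conj(H_0^p)`: those `f ∈ H^p` such that `I·f` has vanishing
Fourier coefficients of index `≥ 0` (i.e. `I·f ∈ conj(H_0^p)`). -/
def KIp (p : ℝ≥0∞) (I : Hinf) : Set (Lp ℂ p mTc) :=
  {f | f ∈ Hp p ∧ ∀ n : ℤ, 0 ≤ n → fourierCoeff (fun x => I.bdry x * f x) n = 0}

/-- `IsRieszProj Pp` asserts that the bounded operator `Pp` is the Riesz projection `P₊`,
keeping the nonnegative Fourier coefficients and killing the negative ones. -/
def IsRieszProj {p : ℝ≥0∞} [Fact (1 ≤ p)] (Pp : Lp ℂ p mTc →L[ℂ] Lp ℂ p mTc) : Prop :=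
  ∀ f : Lp ℂ p mTc, ∀ n : ℤ,
    fourierCoeff (⇑(Pp f)) n = if 0 ≤ n then fourierCoeff (⇑f) n else 0

/-- The Toeplitz operator `T_ψ f = P₊(ψ f)`. -/
def toep {p : ℝ≥0∞} [Fact (1 ≤ p)] (Pp : Lp ℂ p mTc →L[ℂ] Lp ℂ p mTc) (ψ : Tc → ℂ)
    (f : Lp ℂ p mTc) : Lp ℂ p mTc := Pp (mulLp ψ f)

/-- The Hankel operator `H_ψ f = P₋(ψ f) = ψ f − P₊(ψ f)`. -/
def hankel {p : ℝ≥0∞} [Fact (1 ≤ p)] (Pp : Lp ℂ p mTc →L[ℂ] Lp ℂ p mTc) (ψ : Tc → ℂ)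
    (f : Lp ℂ p mTc) : Lp ℂ p mTc := mulLp ψ f - Pp (mulLp ψ f)

/-- The projection `P_I f = I·P₋(conj(I)·f)` of `H^p` onto `K_I^p`. -/
def PIproj {p : ℝ≥0∞} [Fact (1 ≤ p)] (Pp : Lp ℂ p mTc →L[ℂ] Lp ℂ p mTc) (I : Hinf)
    (f : Lp ℂ p mTc) : Lp ℂ p mTc :=
  mulLp I.bdry (hankel Pp (fun x => (starRingEnd ℂ) (I.bdry x)) f)

/-- The compressed shift `S^I f = P_I (z f)`. -/
def SI {p : ℝ≥0∞} [Fact (1 ≤ p)] (Pp : Lp ℂ p mTc →L[ℂ] Lp ℂ p mTc) (I : Hinf)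
    (f : Lp ℂ p mTc) : Lp ℂ p mTc := PIproj Pp I (mulLp bc f)

/-- The compressed Toeplitz operator `T_φ^I = P_I T_φ` on `K_I^p`. -/
def toepI {p : ℝ≥0∞} [Fact (1 ≤ p)] (Pp : Lp ℂ p mTc →L[ℂ] Lp ℂ p mTc) (I : Hinf) (ψ : Tc → ℂ)
    (f : Lp ℂ p mTc) : Lp ℂ p mTc := PIproj Pp I (toep Pp ψ f)

/-- The shift-invariant subspace `I·H^p`. -/
def IHp (p : ℝ≥0∞) (I : Hinf) : Set (Lp ℂ p mTc) :=
  {h | ∃ u ∈ Hp p, h = mulLp I.bdry u}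

/-- The pairing `⟨f,g⟩ = (1/2π) ∫ f conj(g) dθ`. -/
def pairing (f g : Tc → ℂ) : ℂ := ∫ x, f x * (starRingEnd ℂ) (g x) ∂mTc
/-- The function `conj(b_z)·k_z` on the circle, where `b_z` is the Blaschke factor at `z`
and `k_z(w) = (1-|z|²)^{1/q}/(1-conj(z)w)`. -/
def bkfun (q : ℝ) (z : ℂ) (x : Tc) : ℂ :=
  (starRingEnd ℂ) ((bc x - z) / (1 - (starRingEnd ℂ) z * bc x)) *
    ((((1 - ‖z‖ ^ 2) ^ (1 / q) : ℝ) : ℂ) / (1 - (starRingEnd ℂ) z * bc x))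

/-! ### Auxiliary lemmas -/

lemma norm_fourier' (n : ℤ) (x : Tc) : ‖fourier n x‖ = 1 := Circle.norm_coe _

lemma norm_bc (x : Tc) : ‖bc x‖ = 1 := norm_fourier' 1 x

lemma conj_bc (x : Tc) : (starRingEnd ℂ) (bc x) = fourier (-1) x := (fourier_neg).symm

lemma continuous_bc : Continuous bc := (fourier 1).continuous

lemma one_sub_ne_zero {a b : ℂ} (ha : ‖a‖ < 1) (hb : ‖b‖ = 1) : 1 - a * b ≠ 0 := by
  intro h
  have h1 : (1 : ℂ) = a * b := sub_eq_zero.mp h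
  have := congrArg norm h1
  rw [norm_mul, hb, mul_one, norm_one] at this
  exact absurd this.symm (ne_of_lt ha)

/-- The kernel function `C e^{-iθ}/(1 - z e^{-iθ})`. -/
def gker (c z : ℂ) (x : Tc) : ℂ := c * (starRingEnd ℂ) (bc x) / (1 - z * (starRingEnd ℂ) (bc x))

lemma bkfun_eq_gker {q : ℝ} {z : ℂ} (hz : ‖z‖ < 1) (x : Tc) :
    bkfun q z x = gker (((1 - ‖z‖ ^ 2) ^ (1 / q) : ℝ) : ℂ) z x := by
  have hb := norm_bc x
  have hcb : ‖(starRingEnd ℂ) (bc x)‖ = 1 := by rw [RingHomIsometric.norm_map]; exact hb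
  have hd1 : 1 - (starRingEnd ℂ) z * bc x ≠ 0 :=
    one_sub_ne_zero (by rwa [RingHomIsometric.norm_map]) hb
  have hd2 : 1 - z * (starRingEnd ℂ) (bc x) ≠ 0 := one_sub_ne_zero hz hcb
  have hw : bc x * (starRingEnd ℂ) (bc x) = 1 := by
    rw [Complex.mul_conj]
    norm_cast
    rw [Complex.normSq_eq_norm_sq, hb]; norm_num
  have hconj : (starRingEnd ℂ) ((bc x - z) / (1 - (starRingEnd ℂ) z * bc x)) =
      ((starRingEnd ℂ) (bc x) - (starRingEnd ℂ) z) / (1 - z * (starRingEnd ℂ) (bc x)) := by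
    rw [map_div₀, map_sub, map_sub, map_one, map_mul, RingHomCompTriple.comp_apply,
      RingHom.id_apply]
  rw [bkfun, gker, hconj]
  rw [div_mul_div_comm, div_eq_div_iff (mul_ne_zero hd2 hd1) hd2]
  linear_combination (((1 - ‖z‖ ^ 2) ^ (1 / q) : ℝ) : ℂ) *
    (1 - z * (starRingEnd ℂ) (bc x)) * (starRingEnd ℂ) z * hw

lemma continuous_gker {z : ℂ} (hz : ‖z‖ < 1) (c : ℂ) : Continuous (gker c z) := by
  have hcb : Continuous fun x : Tc => (starRingEnd ℂ) (bc x) :=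
    Complex.continuous_conj.comp continuous_bc
  exact (continuous_const.mul hcb).div (continuous_const.sub (continuous_const.mul hcb))
    fun x => one_sub_ne_zero hz (by rw [RingHomIsometric.norm_map]; exact norm_bc x)

lemma norm_gker_le {z : ℂ} (hz : ‖z‖ < 1) (c : ℂ) (x : Tc) :
    ‖gker c z x‖ ≤ ‖c‖ / (1 - ‖z‖) := by
  have hcb : ‖(starRingEnd ℂ) (bc x)‖ = 1 := by rw [RingHomIsometric.norm_map]; exact norm_bc x
  have hden : 1 - ‖z‖ ≤ ‖1 - z * (starRingEnd ℂ) (bc x)‖ := by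
    calc 1 - ‖z‖ = ‖(1 : ℂ)‖ - ‖z * (starRingEnd ℂ) (bc x)‖ := by
          rw [norm_one, norm_mul, hcb, mul_one]
      _ ≤ ‖1 - z * (starRingEnd ℂ) (bc x)‖ := norm_sub_norm_le _ _
  rw [gker, norm_div, norm_mul, hcb, mul_one]
  exact div_le_div_of_nonneg_left (norm_nonneg c) (by linarith) hden

lemma memℒp_gker {z : ℂ} (hz : ‖z‖ < 1) (c : ℂ) (p : ℝ≥0∞) : MemLp (gker c z) p mTc :=
  MemLp.of_bound (continuous_gker hz c).aestronglyMeasurable (‖c‖ / (1 - ‖z‖))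
    (Filter.Eventually.of_forall (norm_gker_le hz c))

lemma integral_fourier_eq_zero {m : ℤ} (hm : m ≠ 0) : ∫ x : Tc, fourier m x ∂mTc = 0 :=
  integral_eq_zero_of_add_right_eq_neg (μ := mTc)
    (fourier_add_half_inv_index hm (by positivity))

lemma fourier_neg_one_pow (k : ℕ) (x : Tc) :
    (fourier (-1 : ℤ) x) ^ k = fourier (-(k : ℤ)) x := by
  induction k with
  | zero => simp [fourier_zero]
  | succ n ih =>
      rw [pow_succ, ih, ← fourier_add]
      congr 1
      push_cast
      ring

lemma fourierCoeff_gker_eq_zero {z : ℂ} (hz : ‖z‖ < 1) (c : ℂ) {n : ℤ} (hn : 0 ≤ n) :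
    fourierCoeff (gker c z) n = 0 := by
  classical
  -- the summands
  set F : ℕ → Tc → ℂ := fun k x => c * z ^ k * fourier (-(n + k + 1)) x with hF
  have hsum : ∀ x : Tc, HasSum (fun k => F k x) (fourier (-n) x • gker c z x) := by
    intro x
    have hnorm : ‖z * fourier (-1 : ℤ) x‖ < 1 := by
      rw [norm_mul, norm_fourier', mul_one]; exact hz
    have hgeo := (hasSum_geometric_of_norm_lt_one hnorm).mul_left
      (fourier (-n) x * (c * fourier (-1 : ℤ) x))
    have hd : 1 - z * fourier (-1 : ℤ) x ≠ 0 :=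
      one_sub_ne_zero hz (norm_fourier' _ _)
    have hval : fourier (-n) x * (c * fourier (-1 : ℤ) x) * (1 - z * fourier (-1 : ℤ) x)⁻¹ =
        fourier (-n) x • gker c z x := by
      rw [smul_eq_mul, gker, conj_bc, div_eq_mul_inv]
      ring
    rw [← hval]
    refine hgeo.congr_fun fun k => ?_
    rw [hF]
    simp only [mul_pow, fourier_neg_one_pow]
    have : fourier (-(n + k + 1)) x = fourier (-n) x * (fourier (-1:ℤ) x * fourier (-(k:ℤ)) x) := by
      rw [← fourier_add, ← fourier_add]
      congr 1
      ring
    rw [this]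
    ring
  have hmeas : ∀ k : ℕ, AEStronglyMeasurable (F k) mTc := fun k =>
    (continuous_const.mul (fourier _).continuous).aestronglyMeasurable
  have hlint : ∀ k : ℕ, ∫⁻ x, ‖F k x‖₊ ∂mTc = (‖c‖₊ * ‖z‖₊ ^ k : ℝ≥0) := by
    intro k
    have : ∀ x : Tc, (‖F k x‖₊ : ℝ≥0∞) = (‖c‖₊ * ‖z‖₊ ^ k : ℝ≥0) := by
      intro x
      have h1 : ‖fourier (-(n + k + 1)) x‖₊ = 1 :=
        NNReal.eq (by rw [coe_nnnorm, norm_fourier', NNReal.coe_one])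
      have h2 : ‖F k x‖₊ = ‖c‖₊ * ‖z‖₊ ^ k := by
        rw [hF]; simp only [nnnorm_mul, nnnorm_pow, h1, mul_one]
      exact congrArg _ h2
    simp_rw [this]
    rw [lintegral_const, measure_univ, mul_one]
  have hfin : ∑' k : ℕ, ∫⁻ x, ‖F k x‖₊ ∂mTc ≠ ⊤ := by
    simp_rw [hlint]
    push_cast
    rw [ENNReal.tsum_mul_left]
    refine ENNReal.mul_ne_top ENNReal.coe_ne_top ?_
    have hzn : ‖z‖₊ < 1 := by
      rw [← NNReal.coe_lt_coe, coe_nnnorm, NNReal.coe_one]; exact hz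
    have hz1 : (‖z‖₊ : ℝ≥0∞) < 1 := by exact_mod_cast hzn
    rw [ENNReal.tsum_geometric]
    refine ENNReal.inv_ne_top.mpr ?_
    rw [Ne, tsub_eq_zero_iff_le, not_le]
    exact hz1
  have hcoeff : fourierCoeff (gker c z) n = ∫ x, ∑' k, F k x ∂mTc := by
    rw [fourierCoeff]
    exact integral_congr_ae (Filter.Eventually.of_forall fun x => ((hsum x).tsum_eq).symm)
  rw [hcoeff, integral_tsum hmeas hfin]
  have hzero : ∀ k : ℕ, ∫ x, F k x ∂mTc = 0 := by
    intro k
    rw [hF]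
    simp only
    rw [integral_const_mul, integral_fourier_eq_zero (by omega), mul_zero]
  simp [hzero]

/-- Uniqueness of Fourier coefficients: an `L^p` element all of whose Fourier coefficients
vanish is zero. -/
lemma Lp_eq_zero_of_fourierCoeff_eq_zero (p q : ℝ) (hp : 1 < p) (hq : 1 < q)
    (hpq : 1 / p + 1 / q = 1) [Fact ((1 : ℝ≥0∞) ≤ ENNReal.ofReal p)]
    (u : Lp ℂ (ENNReal.ofReal p) mTc) (hu : ∀ n : ℤ, fourierCoeff (⇑u) n = 0) :
    u = 0 := by
  have hp0 : (0:ℝ) < p := by linarith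
  have hq0 : (0:ℝ) < q := by linarith
  haveI hqF : Fact ((1 : ℝ≥0∞) ≤ ENNReal.ofReal q) :=
    ⟨by rw [show (1:ℝ≥0∞) = ENNReal.ofReal 1 by simp]; exact ENNReal.ofReal_le_ofReal hq.le⟩
  have hpq' : Real.HolderConjugate p q := Real.holderConjugate_iff.mpr ⟨hp, by rw [← one_div, ← one_div]; exact hpq⟩
  have hqne0 : ENNReal.ofReal q ≠ 0 := by
    simp [ENNReal.ofReal_eq_zero, not_le, hq0]
  have hmemu : MemLp (⇑u) (ENNReal.ofReal p) mTc := Lp.memLp u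
  -- products with `L^q` elements are integrable
  have hint : ∀ φ : Tc → ℂ, MemLp φ (ENNReal.ofReal q) mTc →
      Integrable (fun x => u x * φ x) mTc := by
    intro φ hφ
    have h1 : (1:ℝ≥0∞) / 1 = 1 / ENNReal.ofReal q + 1 / ENNReal.ofReal p := by
      rw [one_div, one_div, one_div, ← ENNReal.ofReal_inv_of_pos hq0,
        ← ENNReal.ofReal_inv_of_pos hp0, ← ENNReal.ofReal_add (by positivity) (by positivity)]
      rw [show q⁻¹ + p⁻¹ = 1 by rw [add_comm]; rw [one_div, one_div] at hpq; exact hpq]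
      simp
    haveI : ENNReal.HolderTriple (ENNReal.ofReal q) (ENNReal.ofReal p) 1 :=
      ⟨by rw [← one_div, ← one_div, ← one_div]; exact h1.symm⟩
    have h2 : MemLp (φ • (⇑u)) 1 mTc := MemLp.smul hmemu hφ
    rw [memLp_one_iff_integrable] at h2
    have : (φ • (⇑u)) = fun x => u x * φ x := funext fun x => mul_comm _ _
    rwa [this] at h2
  -- the continuous linear functional `φ ↦ ∫ u φ`
  set L : Lp ℂ (ENNReal.ofReal q) mTc → ℂ := fun φ => ∫ x, u x * φ x ∂mTc with hLdef
  have hLbound : ∀ φ : Lp ℂ (ENNReal.ofReal q) mTc,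
      ‖L φ‖ ≤ (∫ x, ‖u x‖ ^ p ∂mTc) ^ (1/p) * ‖φ‖ := by
    intro φ
    have hφm : MemLp (⇑φ) (ENNReal.ofReal q) mTc := Lp.memLp φ
    have hH := integral_mul_norm_le_Lp_mul_Lq (μ := mTc) hpq' hmemu hφm
    have hnormφ : (∫ x, ‖φ x‖ ^ q ∂mTc) ^ (1/q) = ‖φ‖ := by
      rw [Lp.norm_def, hφm.eLpNorm_eq_integral_rpow_norm hqne0 ENNReal.ofReal_ne_top,
        ENNReal.toReal_ofReal (by positivity), ENNReal.toReal_ofReal hq0.le, one_div]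
    calc ‖L φ‖ ≤ ∫ x, ‖u x * φ x‖ ∂mTc := norm_integral_le_integral_norm _
      _ = ∫ x, ‖u x‖ * ‖φ x‖ ∂mTc := by simp_rw [norm_mul]
      _ ≤ (∫ x, ‖u x‖ ^ p ∂mTc) ^ (1/p) * (∫ x, ‖φ x‖ ^ q ∂mTc) ^ (1/q) := hH
      _ = (∫ x, ‖u x‖ ^ p ∂mTc) ^ (1/p) * ‖φ‖ := by rw [hnormφ]
  have hLadd : ∀ φ ψ : Lp ℂ (ENNReal.ofReal q) mTc, L (φ + ψ) = L φ + L ψ := by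
    intro φ ψ
    have hc : (⇑(φ + ψ) : Tc → ℂ) =ᵐ[mTc] ⇑φ + ⇑ψ := Lp.coeFn_add φ ψ
    rw [hLdef]
    simp only
    rw [← integral_add (hint _ (Lp.memLp φ)) (hint _ (Lp.memLp ψ))]
    refine integral_congr_ae ?_
    filter_upwards [hc] with x hx
    rw [hx]
    simp [mul_add]
  have hLsmul : ∀ (c : ℂ) (φ : Lp ℂ (ENNReal.ofReal q) mTc), L (c • φ) = c * L φ := by
    intro c φ
    have hc : (⇑(c • φ) : Tc → ℂ) =ᵐ[mTc] c • ⇑φ := Lp.coeFn_smul c φ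
    rw [hLdef]
    simp only
    rw [← integral_const_mul]
    refine integral_congr_ae ?_
    filter_upwards [hc] with x hx
    rw [hx]
    simp only [Pi.smul_apply, smul_eq_mul]
    ring
  have hLcont : Continuous L := by
    set K : ℝ := (∫ x, ‖u x‖ ^ p ∂mTc) ^ (1/p) with hK
    have hK0 : 0 ≤ K := by positivity
    refine (LipschitzWith.of_dist_le_mul (K := K.toNNReal) (fun φ ψ => ?_)).continuous
    rw [dist_eq_norm, dist_eq_norm]
    have hsub : L φ - L ψ = L (φ - ψ) := by
      have := hLadd (φ - ψ) ψ
      rw [sub_add_cancel] at this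
      rw [this]; ring
    rw [hsub, Real.coe_toNNReal _ hK0]
    exact hLbound _
  -- L vanishes on a dense subspace, hence everywhere
  have hLfourier : ∀ m : ℤ, L (fourierLp (ENNReal.ofReal q) m) = 0 := by
    intro m
    have hc : (⇑(fourierLp (T := 2 * Real.pi) (ENNReal.ofReal q) m) : Tc → ℂ) =ᵐ[mTc] fourier m :=
      ContinuousMap.coeFn_toAEEqFun mTc (fourier m)
    have : L (fourierLp (ENNReal.ofReal q) m) = ∫ x, u x * fourier m x ∂mTc := by
      refine integral_congr_ae ?_
      filter_upwards [hc] with x hx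
      rw [hx]
    rw [this]
    have : ∫ x, u x * fourier m x ∂mTc = fourierCoeff (⇑u) (-m) := by
      rw [fourierCoeff]
      refine integral_congr_ae (Filter.Eventually.of_forall fun x => ?_)
      simp only [neg_neg, smul_eq_mul]
      exact mul_comm _ _
    rw [this, hu]
  have hLzero : ∀ φ : Lp ℂ (ENNReal.ofReal q) mTc, L φ = 0 := by
    set S : Submodule ℂ (Lp ℂ (ENNReal.ofReal q) mTc) :=
      { carrier := {φ | L φ = 0}
        add_mem' := fun ha hb => by simp only [Set.mem_setOf_eq] at *; rw [hLadd _ _, ha, hb,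
          add_zero]
        zero_mem' := by
          have h0 : (0 : Lp ℂ (ENNReal.ofReal q) mTc) = (0:ℂ) • 0 := by simp
          simp only [Set.mem_setOf_eq]
          rw [h0, hLsmul]; simp
        smul_mem' := fun c φ h => by simp only [Set.mem_setOf_eq] at *; rw [hLsmul, h, mul_zero] }
      with hS
    have hclosed : IsClosed (S : Set (Lp ℂ (ENNReal.ofReal q) mTc)) :=
      isClosed_eq hLcont continuous_const
    have hle : (Submodule.span ℂ (Set.range (fourierLp (T := 2 * Real.pi) (ENNReal.ofReal q)))) ≤
        S := by
      rw [Submodule.span_le]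
      rintro - ⟨m, rfl⟩
      exact hLfourier m
    have htop : S = ⊤ := by
      rw [← top_le_iff, ← span_fourierLp_closure_eq_top (T := 2 * Real.pi)
        (hp := ENNReal.ofReal_ne_top)]
      exact Submodule.topologicalClosure_minimal _ hle hclosed
    intro φ
    have : φ ∈ S := by rw [htop]; trivial
    exact this
  -- hence all set integrals of `u` vanish
  have hsets : ∀ s : Set Tc, MeasurableSet s → mTc s < ∞ → ∫ x in s, u x ∂mTc = 0 := by
    intro s hs _
    set φ := indicatorConstLp (ENNReal.ofReal q) hs (measure_ne_top mTc s) (1 : ℂ) with hφ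
    have h1 : L φ = ∫ x in s, u x ∂mTc := by
      have hc : (⇑φ : Tc → ℂ) =ᵐ[mTc] s.indicator fun _ => (1:ℂ) := indicatorConstLp_coeFn
      have h2 : (fun x => u x * φ x) =ᵐ[mTc] s.indicator (⇑u) := by
        filter_upwards [hc] with x hx
        rw [hx]
        by_cases hxs : x ∈ s
        · simp [Set.indicator_of_mem hxs]
        · simp [Set.indicator_of_notMem hxs]
      rw [hLdef]
      simp only
      rw [integral_congr_ae h2, integral_indicator hs]
    rw [← h1, hLzero]
  -- conclude
  have hintu : ∀ s : Set Tc, MeasurableSet s → mTc s < ∞ → IntegrableOn (⇑u) s mTc := by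
    intro s _ _
    have : Integrable (⇑u) mTc := by
      have h2 : MemLp (⇑u) 1 mTc :=
        hmemu.mono_exponent (by exact Fact.out)
      rwa [memLp_one_iff_integrable] at h2
    exact this.integrableOn
  have := Lp.ae_eq_zero_of_forall_setIntegral_eq_zero u
    (by simp [ENNReal.ofReal_eq_zero, not_le, hp0]) ENNReal.ofReal_ne_top hintu hsets
  rw [← Lp.eq_zero_iff_ae_eq_zero] at this
  exact this

/-- `P₋(conj(b_z) k_z)(e^{iθ}) = (1-|z|²)^{1/q} e^{-iθ}/(1-z e^{-iθ})`,
and `‖P₋(conj(b_z) k_z)‖_{L^p}` is bounded below by a positive constant for `|z|` close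
to `1`. -/
theorem Pminus_conj_blaschke_kernel (p q : ℝ) (hp : 1 < p) (hq : 1 < q)
    (hpq : 1 / p + 1 / q = 1) [Fact ((1 : ℝ≥0∞) ≤ ENNReal.ofReal p)]
    (Pp : Lp ℂ (ENNReal.ofReal p) mTc →L[ℂ] Lp ℂ (ENNReal.ofReal p) mTc)
    (hPp : IsRieszProj Pp) :
    (∀ z ∈ ball (0 : ℂ) 1,
      (⇑(toLp' (ENNReal.ofReal p) (bkfun q z) - Pp (toLp' (ENNReal.ofReal p) (bkfun q z)))
          : Tc → ℂ) =ᵐ[mTc]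
        fun x => (((1 - ‖z‖ ^ 2) ^ (1 / q) : ℝ) : ℂ) * (starRingEnd ℂ) (bc x) /
          (1 - z * (starRingEnd ℂ) (bc x))) ∧
    (∃ c r : ℝ, 0 < c ∧ r < 1 ∧ ∀ z : ℂ, r < ‖z‖ → ‖z‖ < 1 →
      c ≤ ‖toLp' (ENNReal.ofReal p) (bkfun q z) -
            Pp (toLp' (ENNReal.ofReal p) (bkfun q z))‖) := by
  have hp0 : (0:ℝ) < p := by linarith
  have hq0 : (0:ℝ) < q := by linarith
  have hπ0 : (0:ℝ) < Real.pi := Real.pi_pos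
  -- the main structural facts, for every `z` in the disc
  have main : ∀ z : ℂ, ‖z‖ < 1 →
      ∃ hmem : MemLp (bkfun q z) (ENNReal.ofReal p) mTc,
        toLp' (ENNReal.ofReal p) (bkfun q z) = hmem.toLp _ ∧
        toLp' (ENNReal.ofReal p) (bkfun q z) - Pp (toLp' (ENNReal.ofReal p) (bkfun q z)) =
          toLp' (ENNReal.ofReal p) (bkfun q z) := by
    intro z hz
    set Cc : ℂ := (((1 - ‖z‖ ^ 2) ^ (1 / q) : ℝ) : ℂ) with hCc
    have hbk : bkfun q z = gker Cc z := funext (bkfun_eq_gker hz)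
    have hmem : MemLp (bkfun q z) (ENNReal.ofReal p) mTc := by
      rw [hbk]; exact memℒp_gker hz Cc _
    refine ⟨hmem, ?_, ?_⟩
    · rw [toLp', dif_pos hmem]
    · have hLp : toLp' (ENNReal.ofReal p) (bkfun q z) = hmem.toLp _ := by
        rw [toLp', dif_pos hmem]
      have hcoe : (⇑(toLp' (ENNReal.ofReal p) (bkfun q z)) : Tc → ℂ) =ᵐ[mTc] bkfun q z := by
        rw [hLp]; exact hmem.coeFn_toLp
      have hcoeff : ∀ n : ℤ, fourierCoeff (⇑(toLp' (ENNReal.ofReal p) (bkfun q z))) n =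
          fourierCoeff (gker Cc z) n := by
        intro n
        rw [fourierCoeff, fourierCoeff]
        refine integral_congr_ae ?_
        filter_upwards [hcoe] with x hx
        rw [hx, hbk]
      have hPp0 : Pp (toLp' (ENNReal.ofReal p) (bkfun q z)) = 0 := by
        refine Lp_eq_zero_of_fourierCoeff_eq_zero p q hp hq hpq _ fun n => ?_
        rw [hPp]
        split_ifs with h
        · rw [hcoeff n]
          exact fourierCoeff_gker_eq_zero hz Cc h
        · rfl
      rw [hPp0, sub_zero]
  constructor
  · -- Part 1: description of `P₋(conj(b_z) k_z)`
    intro z hz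
    rw [mem_ball_zero_iff] at hz
    obtain ⟨hmem, hLp, hsub⟩ := main z hz
    rw [hsub, hLp]
    refine hmem.coeFn_toLp.trans (Filter.Eventually.of_forall fun x => ?_)
    exact bkfun_eq_gker hz x
  · -- Part 2: uniform lower bound on the norm
    refine ⟨(3 * Real.pi)⁻¹, 3/4, by positivity, by norm_num, ?_⟩
    intro z hr hz
    obtain ⟨hmem, hLp, hsub⟩ := main z hz
    rw [hsub, hLp, Lp.norm_toLp]
    -- notation
    set t : ℝ := 1 - ‖z‖ with ht
    have ht0 : 0 < t := by simp only [ht]; linarith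
    have ht4 : t < 1/4 := by simp only [ht]; linarith
    set C : ℝ := (1 - ‖z‖ ^ 2) ^ (1 / q) with hC
    have hz2 : 0 < 1 - ‖z‖ ^ 2 := by nlinarith [norm_nonneg z]
    have hC0 : 0 < C := Real.rpow_pos_of_pos hz2 _
    set α : ℝ := z.arg with hα
    -- pointwise lower bound on the arc
    have hpoint : ∀ θ : ℝ, θ ∈ Set.Ioc (α - t) (α + t) →
        C / (3 * t) ≤ ‖bkfun q z (↑θ : Tc)‖ := by
      intro θ hθ
      have hs : |α - θ| ≤ t := by
        rw [abs_le]
        cases' hθ with h1 h2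
        constructor <;> linarith
      have hbcθ : bc (↑θ : Tc) = Complex.exp (θ * Complex.I) := by
        rw [bc, fourier_coe_apply]
        congr 1
        have hne : (2 * Real.pi : ℂ) ≠ 0 := by
          simp only [ne_eq, mul_eq_zero, not_or]
          refine ⟨by norm_num, ?_⟩
          exact_mod_cast hπ0.ne'
        push_cast
        field_simp
      have hconjbc : (starRingEnd ℂ) (bc (↑θ : Tc)) = Complex.exp (-(θ * Complex.I)) := by
        rw [hbcθ, ← Complex.exp_conj]
        congr 1
        simp [Complex.conj_I]
      have hzconj : z * (starRingEnd ℂ) (bc (↑θ : Tc)) =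
          (‖z‖ : ℂ) * Complex.exp (((α - θ : ℝ) : ℂ) * Complex.I) := by
        rw [hconjbc]
        conv_lhs => rw [← Complex.norm_mul_exp_arg_mul_I z]
        rw [mul_assoc, ← Complex.exp_add, ← hα]
        congr 2
        push_cast
        ring
      have hexp1 : ‖Complex.exp (((α - θ : ℝ) : ℂ) * Complex.I)‖ = 1 := by
        rw [Complex.norm_exp]
        simp
      have hden : ‖1 - z * (starRingEnd ℂ) (bc (↑θ : Tc))‖ ≤ 3 * t := by
        rw [hzconj]
        have hsplit : 1 - (‖z‖ : ℂ) * Complex.exp (((α - θ : ℝ) : ℂ) * Complex.I) =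
            (1 - Complex.exp (((α - θ : ℝ) : ℂ) * Complex.I)) +
              Complex.exp (((α - θ : ℝ) : ℂ) * Complex.I) * (((t : ℝ) : ℂ)) := by
          rw [ht]
          push_cast
          ring
        rw [hsplit]
        have h1 : ‖(1 : ℂ) - Complex.exp (((α - θ : ℝ) : ℂ) * Complex.I)‖ ≤ 2 * t := by
          rw [norm_sub_rev]
          have habs : ‖((α - θ : ℝ) : ℂ) * Complex.I‖ ≤ 1 := by
            rw [norm_mul, Complex.norm_I, mul_one, Complex.norm_real, Real.norm_eq_abs]
            calc |α - θ| ≤ t := hs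
              _ ≤ 1 := by linarith
          have h2 := Complex.norm_exp_sub_one_le habs
          rw [norm_mul, Complex.norm_I, mul_one, Complex.norm_real, Real.norm_eq_abs] at h2
          calc ‖Complex.exp (((α - θ : ℝ) : ℂ) * Complex.I) - 1‖
              ≤ 2 * |α - θ| := h2
            _ ≤ 2 * t := by linarith
        have h2 : ‖Complex.exp (((α - θ : ℝ) : ℂ) * Complex.I) * (((t : ℝ) : ℂ))‖ = t := by
          rw [norm_mul, hexp1, one_mul, Complex.norm_real, Real.norm_eq_abs, abs_of_pos ht0]
        calc ‖(1 - Complex.exp (((α - θ : ℝ) : ℂ) * Complex.I)) +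
              Complex.exp (((α - θ : ℝ) : ℂ) * Complex.I) * (((t : ℝ) : ℂ))‖
            ≤ ‖(1 : ℂ) - Complex.exp (((α - θ : ℝ) : ℂ) * Complex.I)‖ +
              ‖Complex.exp (((α - θ : ℝ) : ℂ) * Complex.I) * (((t : ℝ) : ℂ))‖ := norm_add_le _ _
          _ ≤ 2 * t + t := by rw [h2]; linarith
          _ = 3 * t := by ring
      have hden0 : 0 < ‖1 - z * (starRingEnd ℂ) (bc (↑θ : Tc))‖ := by
        rw [norm_pos_iff]
        refine one_sub_ne_zero hz ?_
        rw [RingHomIsometric.norm_map]; exact norm_bc _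
      have hnorm : ‖bkfun q z (↑θ : Tc)‖ =
          C / ‖1 - z * (starRingEnd ℂ) (bc (↑θ : Tc))‖ := by
        rw [bkfun_eq_gker hz, gker, norm_div, norm_mul]
        have h1 : ‖(starRingEnd ℂ) (bc (↑θ : Tc))‖ = 1 := by
          rw [RingHomIsometric.norm_map]; exact norm_bc _
        rw [h1, mul_one, Complex.norm_real, Real.norm_eq_abs, abs_of_pos hC0]
      rw [hnorm]
      exact div_le_div_of_nonneg_left hC0.le hden0 hden
    -- measurability
    have hGmeas : Measurable fun x : Tc => (‖bkfun q z x‖₊ : ℝ≥0∞) ^ p := by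
      have hcont : Continuous (bkfun q z) := by
        rw [funext (bkfun_eq_gker hz)]
        exact continuous_gker hz _
      exact hcont.measurable.nnnorm.coe_nnreal_ennreal.pow_const p
    set B : ℝ≥0∞ := ENNReal.ofReal ((C / (3 * t)) ^ p) with hB
    -- lower bound on the arc integral
    have harc : B * ENNReal.ofReal (2 * t) ≤
        ∫⁻ θ in Set.Ioc (α - t) (α + t), (‖bkfun q z (↑θ : Tc)‖₊ : ℝ≥0∞) ^ p := by
      have hmono := setLIntegral_mono (μ := (volume : Measure ℝ))
        (s := Set.Ioc (α - t) (α + t)) (f := fun _ => B)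
        (g := fun θ : ℝ => (‖bkfun q z (↑θ : Tc)‖₊ : ℝ≥0∞) ^ p)
        (hGmeas.comp AddCircle.measurable_mk') ?_
      · calc B * ENNReal.ofReal (2 * t)
            = B * volume (Set.Ioc (α - t) (α + t)) := by
              rw [Real.volume_Ioc]
              congr 2
              ring
          _ = ∫⁻ _ in Set.Ioc (α - t) (α + t), B := by rw [setLIntegral_const]
          _ ≤ _ := hmono
      · intro θ hθ
        rw [hB, ← ENNReal.ofReal_rpow_of_pos (by positivity)]
        refine ENNReal.rpow_le_rpow ?_ hp0.le
        rw [← ENNReal.ofReal_coe_nnreal, coe_nnnorm]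
        exact ENNReal.ofReal_le_ofReal (hpoint θ hθ)
    -- from the arc to the whole circle
    have hsubset : Set.Ioc (α - t) (α + t) ⊆ Set.Ioc (α - Real.pi) (α - Real.pi + 2 * Real.pi) := by
      have hπt : t ≤ Real.pi := by linarith [Real.pi_gt_three]
      intro θ hθ
      cases' hθ with h1 h2
      constructor <;> [linarith; linarith]
    have hcircle : B * ENNReal.ofReal (2 * t) ≤
        ENNReal.ofReal (2 * Real.pi) * ∫⁻ x : Tc, (‖bkfun q z x‖₊ : ℝ≥0∞) ^ p ∂mTc := by
      calc B * ENNReal.ofReal (2 * t)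
          ≤ ∫⁻ θ in Set.Ioc (α - t) (α + t), (‖bkfun q z (↑θ : Tc)‖₊ : ℝ≥0∞) ^ p := harc
        _ ≤ ∫⁻ θ in Set.Ioc (α - Real.pi) (α - Real.pi + 2 * Real.pi),
              (‖bkfun q z (↑θ : Tc)‖₊ : ℝ≥0∞) ^ p := lintegral_mono_set hsubset
        _ = ∫⁻ x : Tc, (‖bkfun q z x‖₊ : ℝ≥0∞) ^ p ∂(volume : Measure Tc) :=
            AddCircle.lintegral_preimage (2 * Real.pi) (α - Real.pi)
              (fun x : Tc => (‖bkfun q z x‖₊ : ℝ≥0∞) ^ p)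
        _ = ENNReal.ofReal (2 * Real.pi) * ∫⁻ x : Tc, (‖bkfun q z x‖₊ : ℝ≥0∞) ^ p ∂mTc := by
            rw [AddCircle.volume_eq_smul_haarAddCircle, lintegral_smul_measure, smul_eq_mul]
    have hlint : B * ENNReal.ofReal (2 * t) / ENNReal.ofReal (2 * Real.pi) ≤
        ∫⁻ x : Tc, (‖bkfun q z x‖₊ : ℝ≥0∞) ^ p ∂mTc := by
      rw [ENNReal.div_le_iff (by simp [hπ0]) ENNReal.ofReal_ne_top]
      exact hcircle.trans (le_of_eq (mul_comm _ _))
    -- conclude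
    have hptoReal : (ENNReal.ofReal p).toReal = p := ENNReal.toReal_ofReal hp0.le
    have heLp : eLpNorm (bkfun q z) (ENNReal.ofReal p) mTc =
        (∫⁻ x : Tc, (‖bkfun q z x‖₊ : ℝ≥0∞) ^ p ∂mTc) ^ (1/p) := by
      rw [eLpNorm_eq_lintegral_rpow_enorm_toReal (by simp [ENNReal.ofReal_eq_zero, not_le, hp0])
        ENNReal.ofReal_ne_top, hptoReal]
      rfl
    -- the numerical inequality
    have hval : ENNReal.ofReal ((3 * Real.pi)⁻¹) ≤
        (B * ENNReal.ofReal (2 * t) / ENNReal.ofReal (2 * Real.pi)) ^ (1/p) := by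
      have hBeq : B * ENNReal.ofReal (2 * t) / ENNReal.ofReal (2 * Real.pi) =
          ENNReal.ofReal ((C / (3 * t)) ^ p * (2 * t) / (2 * Real.pi)) := by
        rw [hB, ← ENNReal.ofReal_mul (by positivity), ← ENNReal.ofReal_div_of_pos (by positivity)]
      rw [hBeq, ENNReal.ofReal_rpow_of_pos (by positivity)]
      refine ENNReal.ofReal_le_ofReal ?_
      -- real inequality
      have hXeq : ((C / (3 * t)) ^ p * (2 * t) / (2 * Real.pi)) ^ (1/p) =
          C / (3 * t) * (t / Real.pi) ^ (1/p) := by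
        have h2t : (2 * t) / (2 * Real.pi) = t / Real.pi := by
          rw [mul_div_mul_left _ _ (by norm_num : (2:ℝ) ≠ 0)]
        rw [mul_div_assoc, h2t, Real.mul_rpow (by positivity) (by positivity),
          ← Real.rpow_mul (by positivity), mul_one_div_cancel hp0.ne', Real.rpow_one]
      rw [hXeq]
      have hCt : t ^ (1/q) ≤ C := by
        rw [hC]
        refine Real.rpow_le_rpow ht0.le ?_ (by positivity)
        nlinarith [norm_nonneg z]
      have htp : (t / Real.pi) ^ (1/p) = t ^ (1/p) / Real.pi ^ (1/p) :=
        Real.div_rpow ht0.le hπ0.le _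
      have hππ : Real.pi ^ (1/p) ≤ Real.pi := by
        calc Real.pi ^ (1/p) ≤ Real.pi ^ (1:ℝ) :=
              Real.rpow_le_rpow_of_exponent_le (by linarith [Real.pi_gt_three])
                (by rw [div_le_one hp0]; linarith)
          _ = Real.pi := Real.rpow_one _
      have hprod : t ^ (1/q) * t ^ (1/p) = t := by
        rw [← Real.rpow_add ht0]
        rw [show 1/q + 1/p = 1 by linarith]
        exact Real.rpow_one t
      have hfinal : (3 * Real.pi)⁻¹ = t ^ (1/q) / (3 * t) * (t ^ (1/p) / Real.pi) := by
        rw [div_mul_div_comm, hprod, show (3 : ℝ) * t * Real.pi = t * (3 * Real.pi) by ring,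
          ← div_div, div_self ht0.ne', one_div]
      have h2 : t ^ (1/p) / Real.pi ≤ (t / Real.pi) ^ (1/p) := by
        rw [htp]
        exact div_le_div_of_nonneg_left (by positivity) (by positivity) hππ
      have h1 : t ^ (1/q) / (3 * t) ≤ C / (3 * t) :=
        (div_le_div_iff_of_pos_right (by positivity)).mpr hCt
      calc (3 * Real.pi)⁻¹ = t ^ (1/q) / (3 * t) * (t ^ (1/p) / Real.pi) := hfinal
        _ ≤ C / (3 * t) * ((t / Real.pi) ^ (1/p)) :=
            mul_le_mul h1 h2 (by positivity) (by positivity)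
    calc (3 * Real.pi)⁻¹
        ≤ (eLpNorm (bkfun q z) (ENNReal.ofReal p) mTc).toReal := by
          rw [← ENNReal.ofReal_le_iff_le_toReal hmem.2.ne]
          calc ENNReal.ofReal ((3 * Real.pi)⁻¹)
              ≤ (B * ENNReal.ofReal (2 * t) / ENNReal.ofReal (2 * Real.pi)) ^ (1/p) := hval
            _ ≤ (∫⁻ x : Tc, (‖bkfun q z x‖₊ : ℝ≥0∞) ^ p ∂mTc) ^ (1/p) :=
                ENNReal.rpow_le_rpow hlint (by positivity)
            _ = eLpNorm (bkfun q z) (ENNReal.ofReal p) mTc := heLp.symm
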